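/- Let δ : Matrix (Fin M) (Fin M) (ZMod 2) satisfy δ·δ = 0, let L = rank(δ) and H = M − 2L (so H ≥ 0 since im δ ⊆ ker δ). Let δ₀ be the M×M canonical boundary operator whose rows and columns are grouped into consecutive blocks of sizes H, L, L and whose only nonzero block is the identity in block position (2,3), i.e. (δ₀) i j = 1 if and only if H ≤ i < H + L and j = i + L. Then there exists an invertible matrix U ∈ Matrix (Fin M) (Fin M) (ZMod 2) such that δ = U·δ₀·U⁻¹. -/

import Mathlib

open Matrix

private theorem exists_good_family {K V : Type*} [Field K] [AddCommGroup V] [Module K V]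
    [FiniteDimensional K V] (f : V →ₗ[K] V) (hf2 : ∀ x, f (f x) = 0)
    (L H M : ℕ) (hL : Module.finrank K (LinearMap.range f) = L)
    (hV : Module.finrank K V = M) (hM : H + L + L = M) :
    ∃ b' : Fin M → V, LinearIndependent K b' ∧ ∀ j : Fin M, f (b' j) =
      if hj : H + L ≤ (j : ℕ) then b' ⟨(j : ℕ) - L, by omega⟩ else 0 := by
  have hRK : LinearMap.range f ≤ LinearMap.ker f := by
    rintro x ⟨y, rfl⟩
    exact hf2 y
  have hKrank : Module.finrank K (LinearMap.ker f) = M - L := by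
    have := LinearMap.finrank_range_add_finrank_ker f
    rw [hV, hL] at this
    omega
  -- r : an independent family spanning a basis of the range
  obtain ⟨r, hr_mem, li_r⟩ : ∃ r : Fin L → V,
      (∀ i, r i ∈ LinearMap.range f) ∧ LinearIndependent K r := by
    let bR : Module.Basis (Fin L) K (LinearMap.range f) :=
      Module.finBasisOfFinrankEq K _ hL
    exact ⟨fun i => (bR i : V), fun i => (bR i).2,
      bR.linearIndependent.map' (LinearMap.range f).subtype (Submodule.ker_subtype _)⟩
  -- v : preimages of r
  obtain ⟨v, hv⟩ : ∃ v : Fin L → V, ∀ i, f (v i) = r i := by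
    choose v hv using fun i => hr_mem i
    exact ⟨v, hv⟩
  -- h : a family completing r to a basis of the kernel
  obtain ⟨h, hh_memK, li_h, hdisj⟩ : ∃ h : Fin H → V,
      (∀ i, h i ∈ LinearMap.ker f) ∧ LinearIndependent K h ∧
      ∀ c : Fin H → K, (∑ i, c i • h i) ∈ LinearMap.range f → (∑ i, c i • h i) = 0 := by
    obtain ⟨W, hW⟩ := Submodule.exists_isCompl
      (Submodule.comap (LinearMap.ker f).subtype (LinearMap.range f))
    have hR''rank : Module.finrank K
        (Submodule.comap (LinearMap.ker f).subtype (LinearMap.range f)) = L := by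
      rw [← hL]
      exact LinearEquiv.finrank_eq (Submodule.comapSubtypeEquivOfLe hRK)
    have hWrank : Module.finrank K W = H := by
      have := Submodule.finrank_add_eq_of_isCompl hW
      rw [hR''rank, hKrank] at this
      omega
    obtain ⟨w, hwW, li_w⟩ : ∃ w : Fin H → (LinearMap.ker f), (∀ i, w i ∈ W) ∧
        LinearIndependent K (fun i => ((w i : V))) := by
      let bW : Module.Basis (Fin H) K W := Module.finBasisOfFinrankEq K _ hWrank
      refine ⟨fun i => (bW i : LinearMap.ker f), fun i => (bW i).2, ?_⟩
      exact (bW.linearIndependent.map' W.subtype (Submodule.ker_subtype _)).map'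
        (LinearMap.ker f).subtype (Submodule.ker_subtype _)
    refine ⟨fun i => ((w i : V)), fun i => (w i).2, li_w, ?_⟩
    intro c hmem
    have hcoe : ((∑ i, c i • w i : LinearMap.ker f) : V)
        = ∑ i, c i • ((w i : V)) := by
      simp
    have hMemW : (∑ i, c i • w i) ∈ W :=
      Submodule.sum_mem _ fun i _ => Submodule.smul_mem _ _ (hwW i)
    have hmem2 : (∑ i, c i • w i) ∈
        Submodule.comap (LinearMap.ker f).subtype (LinearMap.range f) := by
      rw [Submodule.mem_comap]
      show ((∑ i, c i • w i : LinearMap.ker f) : V) ∈ LinearMap.range f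
      rw [hcoe]
      exact hmem
    have hbot : (∑ i, c i • w i) ∈
        (Submodule.comap (LinearMap.ker f).subtype (LinearMap.range f)) ⊓ W :=
      ⟨hmem2, hMemW⟩
    rw [hW.inf_eq_bot, Submodule.mem_bot] at hbot
    rw [← hcoe, hbot]
    rfl
  have hfr : ∀ i, f (r i) = 0 := fun i => hRK (hr_mem i)
  have hfh : ∀ i, f (h i) = 0 := fun i => hh_memK i
  -- linear independence of the combined family
  have li_g : LinearIndependent K
      (Sum.elim (Sum.elim h r) v : (Fin H ⊕ Fin L) ⊕ Fin L → V) := by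
    rw [Fintype.linearIndependent_iff]
    intro c hc
    rw [Fintype.sum_sum_type, Fintype.sum_sum_type] at hc
    simp only [Sum.elim_inl, Sum.elim_inr] at hc
    have hfc : f ((∑ i, c (Sum.inl (Sum.inl i)) • h i +
        ∑ i, c (Sum.inl (Sum.inr i)) • r i) + ∑ i, c (Sum.inr i) • v i) = 0 := by
      rw [hc]; simp
    have hC : ∑ i, c (Sum.inr i) • r i = 0 := by
      simpa [map_sum, hfh, hfr, hv] using hfc
    have hcr : ∀ i, c (Sum.inr i) = 0 := Fintype.linearIndependent_iff.mp li_r _ hC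
    have hC0 : ∑ i, c (Sum.inr i) • v i = 0 := by
      simp [hcr]
    rw [hC0, add_zero] at hc
    have hBR : (∑ i, c (Sum.inl (Sum.inr i)) • r i) ∈ LinearMap.range f :=
      Submodule.sum_mem _ fun i _ => Submodule.smul_mem _ _ (hr_mem i)
    have hAB : ∑ i, c (Sum.inl (Sum.inl i)) • h i = -∑ i, c (Sum.inl (Sum.inr i)) • r i :=
      eq_neg_of_add_eq_zero_left hc
    have hA0 : ∑ i, c (Sum.inl (Sum.inl i)) • h i = 0 :=
      hdisj (fun i => c (Sum.inl (Sum.inl i))) (hAB ▸ neg_mem hBR)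
    have hB0 : ∑ i, c (Sum.inl (Sum.inr i)) • r i = 0 := by
      rw [hA0, zero_add] at hc
      exact hc
    have hch : ∀ i, c (Sum.inl (Sum.inl i)) = 0 :=
      Fintype.linearIndependent_iff.mp li_h _ hA0
    have hcrr : ∀ i, c (Sum.inl (Sum.inr i)) = 0 :=
      Fintype.linearIndependent_iff.mp li_r _ hB0
    rintro (⟨i | i⟩ | i)
    · exact hch i
    · exact hcrr i
    · exact hcr i
  -- transport to Fin M
  let E : ((Fin H ⊕ Fin L) ⊕ Fin L) ≃ Fin M :=
    ((finSumFinEquiv.sumCongr (Equiv.refl (Fin L))).trans finSumFinEquiv).trans (finCongr hM)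
  have hEval : ∀ x, ((E x : Fin M) : ℕ) =
      Sum.elim (Sum.elim (fun i : Fin H => (i : ℕ)) (fun i : Fin L => H + i))
        (fun i : Fin L => H + L + i) x := by
    rintro (⟨i | i⟩ | i) <;> simp [E]
  set g : (Fin H ⊕ Fin L) ⊕ Fin L → V := Sum.elim (Sum.elim h r) v with hg
  refine ⟨g ∘ E.symm, li_g.comp E.symm E.symm.injective, ?_⟩
  have hbh : ∀ (j : Fin M) (hj : (j : ℕ) < H), g (E.symm j) = h ⟨j, hj⟩ := by
    intro j hj
    have : E.symm j = Sum.inl (Sum.inl ⟨j, hj⟩) := by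
      rw [Equiv.symm_apply_eq]
      apply Fin.ext
      rw [hEval]
      simp
    rw [this]
    rfl
  have hbr : ∀ (j : Fin M) (hj1 : H ≤ (j : ℕ)) (hj2 : (j : ℕ) < H + L),
      g (E.symm j) = r ⟨(j : ℕ) - H, by omega⟩ := by
    intro j hj1 hj2
    have : E.symm j = Sum.inl (Sum.inr ⟨(j : ℕ) - H, by omega⟩) := by
      rw [Equiv.symm_apply_eq]
      apply Fin.ext
      rw [hEval]
      simp
      omega
    rw [this]
    rfl
  have hbv : ∀ (j : Fin M) (hj : H + L ≤ (j : ℕ)),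
      g (E.symm j) = v ⟨(j : ℕ) - H - L, by omega⟩ := by
    intro j hj
    have : E.symm j = Sum.inr ⟨(j : ℕ) - H - L, by omega⟩ := by
      rw [Equiv.symm_apply_eq]
      apply Fin.ext
      rw [hEval]
      simp
      omega
    rw [this]
    rfl
  intro j
  by_cases hj : H + L ≤ (j : ℕ)
  · rw [dif_pos hj]
    show f (g (E.symm j)) = g (E.symm ⟨(j : ℕ) - L, by omega⟩)
    rw [hbv j hj, hv,
      hbr ⟨(j : ℕ) - L, by omega⟩ (show H ≤ (j : ℕ) - L by omega)
        (show (j : ℕ) - L < H + L by omega)]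
    exact congrArg r (Fin.ext
      (show (j : ℕ) - H - L = ((⟨(j : ℕ) - L, by omega⟩ : Fin M) : ℕ) - H by
        show (j : ℕ) - H - L = (j : ℕ) - L - H
        omega))
  · rw [dif_neg hj]
    show f (g (E.symm j)) = 0
    by_cases hj1 : (j : ℕ) < H
    · rw [hbh j hj1]; exact hfh _
    · rw [hbr j (by omega) (by omega)]; exact hfr _

set_option maxHeartbeats 1600000 in
/-- Canonical form of a boundary operator: every `M×M` matrix `δ` over `ZMod 2` with
`δ² = 0`, rank `L` and homological dimension `H = M − 2L` is conjugate, by an invertible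
matrix `U`, to the canonical boundary operator `δ₀` whose only nonzero block is the
`L×L` identity in block position `(2,3)` (blocks of sizes `H, L, L`). -/
theorem boundary_operator_canonical_form (M : ℕ)
    (δ : Matrix (Fin M) (Fin M) (ZMod 2)) (hδ : δ * δ = 0)
    (L H : ℕ) (hL : L = δ.rank) (hH : H = M - 2 * L)
    (δ₀ : Matrix (Fin M) (Fin M) (ZMod 2))
    (hδ₀ : ∀ i j : Fin M, δ₀ i j =
      if H ≤ (i : ℕ) ∧ (i : ℕ) < H + L ∧ (j : ℕ) = (i : ℕ) + L then 1 else 0) :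
    ∃ U : Matrix (Fin M) (Fin M) (ZMod 2), IsUnit U ∧ δ = U * δ₀ * U⁻¹ := by
  rcases Nat.eq_zero_or_pos M with hM0 | hM0
  · subst hM0
    refine ⟨1, isUnit_one, ?_⟩
    have : δ = δ₀ := by ext i j; exact absurd i.2 (Nat.not_lt_zero _)
    rw [this, one_mul, inv_one, mul_one]
  obtain ⟨f, hfδ⟩ : ∃ f : (Fin M → ZMod 2) →ₗ[ZMod 2] (Fin M → ZMod 2),
      f = δ.mulVecLin := ⟨δ.mulVecLin, rfl⟩
  have hf2 : ∀ x, f (f x) = 0 := by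
    intro x
    have h1 : f (f x) = (δ * δ).mulVecLin x := by
      rw [hfδ, Matrix.mulVecLin_mul]; rfl
    rw [h1, hδ]
    simp
  have hRK : LinearMap.range f ≤ LinearMap.ker f := by
    rintro x ⟨y, rfl⟩
    exact hf2 y
  have finrankV : Module.finrank (ZMod 2) (Fin M → ZMod 2) = M := by
    simp [Module.finrank_pi]
  have hRrank : Module.finrank (ZMod 2) (LinearMap.range f) = L := by
    rw [hL, hfδ]; rfl
  have h2L : 2 * L ≤ M := by
    have hKrank : Module.finrank (ZMod 2) (LinearMap.ker f) = M - L := by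
      have := LinearMap.finrank_range_add_finrank_ker f
      rw [finrankV, hRrank] at this
      omega
    have h1 : Module.finrank (ZMod 2) (LinearMap.range f) ≤
        Module.finrank (ZMod 2) (LinearMap.ker f) := Submodule.finrank_mono hRK
    have h2 : Module.finrank (ZMod 2) (LinearMap.ker f) ≤ M :=
      le_trans (Submodule.finrank_le _) (le_of_eq finrankV)
    omega
  have hM : H + L + L = M := by omega
  obtain ⟨b', li_b', hfb⟩ := exists_good_family f hf2 L H M hRrank finrankV hM
  -- build a basis from the family
  haveI : Nonempty (Fin M) := ⟨⟨0, hM0⟩⟩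
  have hcard : Fintype.card (Fin M) = Module.finrank (ZMod 2) (Fin M → ZMod 2) := by
    rw [Fintype.card_fin, finrankV]
  obtain ⟨b, hbcoe⟩ : ∃ b : Module.Basis (Fin M) (ZMod 2) (Fin M → ZMod 2), ⇑b = b' :=
    ⟨basisOfLinearIndependentOfCardEqFinrank li_b' hcard,
      coe_basisOfLinearIndependentOfCardEqFinrank li_b' hcard⟩
  -- the change of basis matrix
  obtain ⟨U, hUdef⟩ : ∃ U : Matrix (Fin M) (Fin M) (ZMod 2),
      U = (Pi.basisFun (ZMod 2) (Fin M)).toMatrix ⇑b := ⟨_, rfl⟩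
  have hU : IsUnit U := by
    rw [hUdef]
    haveI := (Pi.basisFun (ZMod 2) (Fin M)).invertibleToMatrix b
    exact isUnit_of_invertible _
  have hUentry : ∀ i j, U i j = b' j i := by
    intro i j
    rw [hUdef, Module.Basis.toMatrix_apply, hbcoe, Pi.basisFun_repr]
  -- the conjugation identity
  have hmain : δ * U = U * δ₀ := by
    ext i j
    rw [Matrix.mul_apply, Matrix.mul_apply]
    have hlhs : ∑ k, δ i k * U k j = f (b' j) i := by
      simp only [hUentry]
      rw [hfδ]
      rfl
    rw [hlhs, hfb]
    by_cases hj : H + L ≤ (j : ℕ)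
    · rw [dif_pos hj]
      have hterm : ∀ k : Fin M, U i k * δ₀ k j =
          if k = (⟨(j : ℕ) - L, by omega⟩ : Fin M) then b' ⟨(j : ℕ) - L, by omega⟩ i else 0 := by
        intro k
        rw [hUentry, hδ₀]
        by_cases hP : H ≤ (k : ℕ) ∧ (k : ℕ) < H + L ∧ (j : ℕ) = (k : ℕ) + L
        · have hkk : k = (⟨(j : ℕ) - L, by omega⟩ : Fin M) := by
            apply Fin.ext
            show (k : ℕ) = (j : ℕ) - L
            omega
          rw [if_pos hP, if_pos hkk, hkk, mul_one]
        · have hkk : k ≠ (⟨(j : ℕ) - L, by omega⟩ : Fin M) := by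
            intro hkk
            apply hP
            have hkv : (k : ℕ) = (j : ℕ) - L := by rw [hkk]
            refine ⟨by omega, by omega, by omega⟩
          rw [if_neg hP, if_neg hkk, mul_zero]
      rw [Finset.sum_congr rfl fun k _ => hterm k, Finset.sum_ite_eq']
      simp
    · rw [dif_neg hj]
      have hterm : ∀ k : Fin M, U i k * δ₀ k j = 0 := by
        intro k
        rw [hδ₀]
        have hP : ¬(H ≤ (k : ℕ) ∧ (k : ℕ) < H + L ∧ (j : ℕ) = (k : ℕ) + L) := by
          rintro ⟨h1, h2, h3⟩
          omega
        rw [if_neg hP, mul_zero]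
      rw [Finset.sum_congr rfl fun k _ => hterm k]
      simp
  have hUinv : U * U⁻¹ = 1 := Matrix.mul_nonsing_inv U ((Matrix.isUnit_iff_isUnit_det U).mp hU)
  refine ⟨U, hU, ?_⟩
  calc δ = δ * (U * U⁻¹) := by rw [hUinv, mul_one]
    _ = (δ * U) * U⁻¹ := by rw [mul_assoc]
    _ = (U * δ₀) * U⁻¹ := by rw [hmain]
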